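/- Let T = {a,b,c,d,e,f} with the metric: d(x,y) = 1 for distinct x,y in {a,b,c,d}, d(e,f) = 1, and d(x,y) = 1/2 whenever x is in {a,b,c,d} and y is in {e,f}. Then this d is a metric, and in the transportation cost space TC(T), the three measures f_1 = (1/2)(δ_a - δ_b + δ_c - δ_d), f_2 = (1/2)(δ_a + δ_b - δ_c - δ_d), f_3 = δ_e - δ_f span a subspace isometric to ell_infinity^3: ||θ_1 f_1 + θ_2 f_2 + θ_3 f_3||_TC = 1 for all signs θ_i = ±1. -/

import Mathlib

/-- The transportation cost norm of a zero-sum function `f` on a finite set `M` with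
distance function `d`: the infimum of `∑ aᵢ d(xᵢ, yᵢ)` over all representations
`f = ∑ aᵢ (δ_{xᵢ} - δ_{yᵢ})` with `aᵢ ≥ 0`. -/
noncomputable def tcNorm {M : Type*} [Fintype M] [DecidableEq M]
    (d : M → M → ℝ) (f : M → ℝ) : ℝ :=
  sInf {c : ℝ | ∃ (m : ℕ) (a : Fin m → ℝ) (x y : Fin m → M),
    (∀ i, 0 ≤ a i) ∧
    (∀ p, f p = ∑ i, a i * ((if p = x i then (1 : ℝ) else 0) -
      (if p = y i then 1 else 0))) ∧
    c = ∑ i, a i * d (x i) (y i)}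

lemma vec6_five {α : Type*} (a b c d e f : α) : ![a,b,c,d,e,f] 5 = f := rfl
lemma vec6_two {α : Type*} (a b c d e f : α) : ![a,b,c,d,e,f] 2 = c := rfl
lemma vec6_three {α : Type*} (a b c d e f : α) : ![a,b,c,d,e,f] 3 = d := rfl
lemma vec6_four {α : Type*} (a b c d e f : α) : ![a,b,c,d,e,f] 4 = e := rfl

lemma fv0 : ((0:Fin 6):ℕ) = 0 := rfl
lemma fv1 : ((1:Fin 6):ℕ) = 1 := rfl
lemma fv2 : ((2:Fin 6):ℕ) = 2 := rfl
lemma fv3 : ((3:Fin 6):ℕ) = 3 := rfl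
lemma fv4 : ((4:Fin 6):ℕ) = 4 := rfl
lemma fv5 : ((5:Fin 6):ℕ) = 5 := rfl

lemma hg_pos (d : Fin 6 → Fin 6 → ℝ)
    (hd : d = fun (x y : Fin 6) => if x = y then 0
      else if ((x : ℕ) < 4 ↔ (y : ℕ) < 4) then 1 else 1 / 2) :
    ∀ x y : Fin 6, ![0,0,0,0,(1:ℝ)/2,-(1/2)] x - ![0,0,0,0,(1:ℝ)/2,-(1/2)] y ≤ d x y := by
  intro x y; fin_cases x <;> fin_cases y <;> norm_num [hd, vec6_five, Fin.ext_iff]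

lemma hg_neg (d : Fin 6 → Fin 6 → ℝ)
    (hd : d = fun (x y : Fin 6) => if x = y then 0
      else if ((x : ℕ) < 4 ↔ (y : ℕ) < 4) then 1 else 1 / 2) :
    ∀ x y : Fin 6, ![0,0,0,0,-((1:ℝ)/2),1/2] x - ![0,0,0,0,-((1:ℝ)/2),1/2] y ≤ d x y := by
  intro x y; fin_cases x <;> fin_cases y <;> norm_num [hd, vec6_five, Fin.ext_iff]

lemma tc_helper (d : Fin 6 → Fin 6 → ℝ)
    (hd0 : ∀ x y, 0 ≤ d x y)
    (F g : Fin 6 → ℝ)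
    (hg : ∀ x y, g x - g y ≤ d x y)
    (hgF : ∑ p, g p * F p = 1)
    (s es t et : Fin 6)
    (hF : ∀ p, F p = ((if p = s then (1:ℝ) else 0) - (if p = et then 1 else 0)) +
      ((if p = es then (1:ℝ) else 0) - (if p = t then 1 else 0)))
    (hcost : d s et + d es t = 1) :
    tcNorm d F = 1 := by
  have hmem : (1:ℝ) ∈ {c : ℝ | ∃ (m : ℕ) (a : Fin m → ℝ) (x y : Fin m → Fin 6),
      (∀ i, 0 ≤ a i) ∧
      (∀ p, F p = ∑ i, a i * ((if p = x i then (1 : ℝ) else 0) -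
        (if p = y i then 1 else 0))) ∧
      c = ∑ i, a i * d (x i) (y i)} := by
    refine ⟨2, ![1, 1], ![s, es], ![et, t], ?_, ?_, ?_⟩
    · intro i; fin_cases i <;> norm_num
    · intro p
      rw [hF p, Fin.sum_univ_two]
      simp
      rfl
    · rw [Fin.sum_univ_two]
      simp [hcost]
  have hlb : ∀ c ∈ {c : ℝ | ∃ (m : ℕ) (a : Fin m → ℝ) (x y : Fin m → Fin 6),
      (∀ i, 0 ≤ a i) ∧
      (∀ p, F p = ∑ i, a i * ((if p = x i then (1 : ℝ) else 0) -
        (if p = y i then 1 else 0))) ∧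
      c = ∑ i, a i * d (x i) (y i)}, (1:ℝ) ≤ c := by
    rintro c ⟨m, a, x, y, ha, hrep, rfl⟩
    have h1 : (1:ℝ) = ∑ i, a i * (g (x i) - g (y i)) := by
      rw [← hgF]
      have : ∀ p, g p * F p = ∑ i, a i * (g p * ((if p = x i then (1:ℝ) else 0) -
          (if p = y i then 1 else 0))) := by
        intro p
        rw [hrep p, Finset.mul_sum]
        exact Finset.sum_congr rfl fun i _ => by ring
      simp only [this]
      rw [Finset.sum_comm]
      refine Finset.sum_congr rfl fun i _ => ?_
      rw [← Finset.mul_sum]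
      congr 1
      simp [mul_sub, Finset.sum_sub_distrib]
    rw [h1]
    exact Finset.sum_le_sum fun i _ =>
      mul_le_mul_of_nonneg_left (hg _ _) (ha i)
  unfold tcNorm
  refine le_antisymm ?_ (le_csInf ⟨1, hmem⟩ hlb)
  refine csInf_le ⟨0, ?_⟩ hmem
  rintro c ⟨m, a, x, y, ha, -, rfl⟩
  exact Finset.sum_nonneg fun i _ => mul_nonneg (ha i) (hd0 _ _)

set_option maxHeartbeats 1000000 in
/-- Let `T = {a,b,c,d,e,f}` (identified with `Fin 6`, `a,b,c,d = 0,1,2,3`,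
`e,f = 4,5`) with `d(x,y) = 1` for distinct `x,y ∈ {a,b,c,d}`, `d(e,f) = 1`, and
`d = 1/2` between the two groups. Then `d` is a metric, and the three transportation
problems `f₁ = (1/2)(δ_a - δ_b + δ_c - δ_d)`, `f₂ = (1/2)(δ_a + δ_b - δ_c - δ_d)`,
`f₃ = δ_e - δ_f` span a subspace of `TC(T)` isometric to `ℓ∞³`:
`‖θ₁f₁ + θ₂f₂ + θ₃f₃‖_TC = 1` for all signs `θᵢ = ±1`. -/
theorem tc_contains_linfty3 (d : Fin 6 → Fin 6 → ℝ)
    (hd : d = fun (x y : Fin 6) => if x = y then 0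
      else if ((x : ℕ) < 4 ↔ (y : ℕ) < 4) then 1 else 1 / 2)
    (f₁ f₂ f₃ : Fin 6 → ℝ)
    (hf₁ : f₁ = ![1 / 2, -(1 / 2), 1 / 2, -(1 / 2), 0, 0])
    (hf₂ : f₂ = ![1 / 2, 1 / 2, -(1 / 2), -(1 / 2), 0, 0])
    (hf₃ : f₃ = ![0, 0, 0, 0, 1, -1]) :
    ((∀ x y, d x y = 0 ↔ x = y) ∧ (∀ x y, d x y = d y x) ∧
      (∀ x y z, d x z ≤ d x y + d y z)) ∧
    (∀ θ₁ θ₂ θ₃ : ℝ, (θ₁ = 1 ∨ θ₁ = -1) → (θ₂ = 1 ∨ θ₂ = -1) → (θ₃ = 1 ∨ θ₃ = -1) →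
      tcNorm d (fun p => θ₁ * f₁ p + θ₂ * f₂ p + θ₃ * f₃ p) = 1) := by
  have hd0 : ∀ x y, 0 ≤ d x y := by
    intro x y; simp only [hd]
    split
    · norm_num
    · split <;> norm_num
  have hdiag : ∀ x, d x x = 0 := by intro x; simp [hd]
  have hle1 : ∀ x y, d x y ≤ 1 := by
    intro x y; simp only [hd]
    split
    · norm_num
    · split <;> norm_num
  have hhalf : ∀ x y, x ≠ y → 1 / 2 ≤ d x y := by
    intro x y h; simp only [hd, if_neg h]
    split <;> norm_num
  constructor
  · refine ⟨?_, ?_, ?_⟩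
    · intro x y
      constructor
      · intro h
        by_contra hne
        have := hhalf x y hne
        linarith
      · rintro rfl; exact hdiag x
    · intro x y
      by_cases h : x = y
      · simp [hd, h]
      · simp only [hd, if_neg h, if_neg (Ne.symm h)]
        by_cases h4 : ((x : ℕ) < 4 ↔ (y : ℕ) < 4)
        · rw [if_pos h4, if_pos h4.symm]
        · rw [if_neg h4, if_neg (fun hc => h4 hc.symm)]
    · intro x y z
      rcases eq_or_ne x z with rfl | hxz
      · rw [hdiag]
        exact add_nonneg (hd0 _ _) (hd0 _ _)
      rcases eq_or_ne x y with rfl | hxy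
      · rw [hdiag]; linarith [hd0 x z]
      rcases eq_or_ne y z with rfl | hyz
      · rw [hdiag]; linarith [hd0 x y]
      · have := hhalf x y hxy
        have := hhalf y z hyz
        have := hle1 x z
        linarith
  · intro θ₁ θ₂ θ₃ h1 h2 h3
    rcases h1 with rfl | rfl <;> rcases h2 with rfl | rfl <;> rcases h3 with rfl | rfl
    · refine tc_helper d hd0 _ ![0,0,0,0,1/2,-(1/2)] (hg_pos d hd) ?_ 0 4 3 5 ?_ ?_
      · rw [Fin.sum_univ_six]; norm_num [hf₁, hf₂, hf₃, vec6_five, vec6_two, vec6_three, vec6_four, Fin.ext_iff, fv0, fv1, fv2, fv3, fv4, fv5]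
      · intro p; fin_cases p <;> norm_num [hf₁, hf₂, hf₃, vec6_five, Fin.ext_iff, fv0, fv1, fv2, fv3, fv4, fv5]
      · norm_num [hd, Fin.ext_iff, fv0, fv1, fv2, fv3, fv4, fv5]
    · refine tc_helper d hd0 _ ![0,0,0,0,-(1/2),1/2] (hg_neg d hd) ?_ 0 5 3 4 ?_ ?_
      · rw [Fin.sum_univ_six]; norm_num [hf₁, hf₂, hf₃, vec6_five, vec6_two, vec6_three, vec6_four, Fin.ext_iff, fv0, fv1, fv2, fv3, fv4, fv5]
      · intro p; fin_cases p <;> norm_num [hf₁, hf₂, hf₃, vec6_five, Fin.ext_iff, fv0, fv1, fv2, fv3, fv4, fv5]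
      · norm_num [hd, Fin.ext_iff, fv0, fv1, fv2, fv3, fv4, fv5]
    · refine tc_helper d hd0 _ ![0,0,0,0,1/2,-(1/2)] (hg_pos d hd) ?_ 2 4 1 5 ?_ ?_
      · rw [Fin.sum_univ_six]; norm_num [hf₁, hf₂, hf₃, vec6_five, vec6_two, vec6_three, vec6_four, Fin.ext_iff, fv0, fv1, fv2, fv3, fv4, fv5]
      · intro p; fin_cases p <;> norm_num [hf₁, hf₂, hf₃, vec6_five, Fin.ext_iff, fv0, fv1, fv2, fv3, fv4, fv5]
      · norm_num [hd, Fin.ext_iff, fv0, fv1, fv2, fv3, fv4, fv5]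
    · refine tc_helper d hd0 _ ![0,0,0,0,-(1/2),1/2] (hg_neg d hd) ?_ 2 5 1 4 ?_ ?_
      · rw [Fin.sum_univ_six]; norm_num [hf₁, hf₂, hf₃, vec6_five, vec6_two, vec6_three, vec6_four, Fin.ext_iff, fv0, fv1, fv2, fv3, fv4, fv5]
      · intro p; fin_cases p <;> norm_num [hf₁, hf₂, hf₃, vec6_five, Fin.ext_iff, fv0, fv1, fv2, fv3, fv4, fv5]
      · norm_num [hd, Fin.ext_iff, fv0, fv1, fv2, fv3, fv4, fv5]
    · refine tc_helper d hd0 _ ![0,0,0,0,1/2,-(1/2)] (hg_pos d hd) ?_ 1 4 2 5 ?_ ?_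
      · rw [Fin.sum_univ_six]; norm_num [hf₁, hf₂, hf₃, vec6_five, vec6_two, vec6_three, vec6_four, Fin.ext_iff, fv0, fv1, fv2, fv3, fv4, fv5]
      · intro p; fin_cases p <;> norm_num [hf₁, hf₂, hf₃, vec6_five, Fin.ext_iff, fv0, fv1, fv2, fv3, fv4, fv5]
      · norm_num [hd, Fin.ext_iff, fv0, fv1, fv2, fv3, fv4, fv5]
    · refine tc_helper d hd0 _ ![0,0,0,0,-(1/2),1/2] (hg_neg d hd) ?_ 1 5 2 4 ?_ ?_
      · rw [Fin.sum_univ_six]; norm_num [hf₁, hf₂, hf₃, vec6_five, vec6_two, vec6_three, vec6_four, Fin.ext_iff, fv0, fv1, fv2, fv3, fv4, fv5]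
      · intro p; fin_cases p <;> norm_num [hf₁, hf₂, hf₃, vec6_five, Fin.ext_iff, fv0, fv1, fv2, fv3, fv4, fv5]
      · norm_num [hd, Fin.ext_iff, fv0, fv1, fv2, fv3, fv4, fv5]
    · refine tc_helper d hd0 _ ![0,0,0,0,1/2,-(1/2)] (hg_pos d hd) ?_ 3 4 0 5 ?_ ?_
      · rw [Fin.sum_univ_six]; norm_num [hf₁, hf₂, hf₃, vec6_five, vec6_two, vec6_three, vec6_four, Fin.ext_iff, fv0, fv1, fv2, fv3, fv4, fv5]
      · intro p; fin_cases p <;> norm_num [hf₁, hf₂, hf₃, vec6_five, Fin.ext_iff, fv0, fv1, fv2, fv3, fv4, fv5]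
      · norm_num [hd, Fin.ext_iff, fv0, fv1, fv2, fv3, fv4, fv5]
    · refine tc_helper d hd0 _ ![0,0,0,0,-(1/2),1/2] (hg_neg d hd) ?_ 3 5 0 4 ?_ ?_
      · rw [Fin.sum_univ_six]; norm_num [hf₁, hf₂, hf₃, vec6_five, vec6_two, vec6_three, vec6_four, Fin.ext_iff, fv0, fv1, fv2, fv3, fv4, fv5]
      · intro p; fin_cases p <;> norm_num [hf₁, hf₂, hf₃, vec6_five, Fin.ext_iff, fv0, fv1, fv2, fv3, fv4, fv5]
      · norm_num [hd, Fin.ext_iff, fv0, fv1, fv2, fv3, fv4, fv5]
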